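/- arXiv:2306.04150 — 2 statements merged into one kernel-verified Lean document; each statement's English description precedes it below -/
import Mathlib

section
/- Let $n \ge 1$ and let $a_1, a_2 \in \mathbb{R}$ satisfy $a_1 < 0$, $a_2 < 0$ and $a_1 + a_2 = -n/2$. Then there exists a constant $C > 0$ such that for all nonnegative functions $A_1, A_2$ on $\mathbb{Z}^n$, $\left( \sum_{\mu \in \mathbb{Z}^n} \Big( \sum_{\nu_1 + \nu_2 = \mu} \langle \nu_1 \rangle^{a_1} \langle \nu_2 \rangle^{a_2} A_1(\nu_1) A_2(\nu_2) \Big)^2 \right)^{1/2} \le C \|A_1\|_{\ell^2(\mathbb{Z}^n)} \|A_2\|_{\ell^2(\mathbb{Z}^n)}$. -/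
open scoped ENNReal

/-- The Japanese-bracket weight `⟨ν⟩^a = (1+|ν|²)^(a/2)` for `ν ∈ ℤⁿ`, as an `ℝ≥0∞`. -/
noncomputable def jweight (n : ℕ) (a : ℝ) (ν : Fin n → ℤ) : ℝ≥0∞ :=
  ENNReal.ofReal ((1 + ∑ i, ((ν i : ℝ)) ^ 2) ^ (a / 2))

open ENNReal

lemma tsum_cs {ι : Type*} (f g : ι → ℝ≥0∞) :
    ∑' i, f i * g i ≤ (∑' i, f i ^ 2) ^ (1/2 : ℝ) * (∑' i, g i ^ 2) ^ (1/2 : ℝ) := by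
  rw [ENNReal.tsum_eq_iSup_sum]
  refine iSup_le fun s => ?_
  calc ∑ i ∈ s, f i * g i
      ≤ (∑ i ∈ s, f i ^ (2:ℝ)) ^ (1/2:ℝ) * (∑ i ∈ s, g i ^ (2:ℝ)) ^ (1/2:ℝ) :=
        ENNReal.inner_le_Lp_mul_Lq s f g ⟨by norm_num, by norm_num, by norm_num⟩
    _ ≤ (∑' i, f i ^ 2) ^ (1/2:ℝ) * (∑' i, g i ^ 2) ^ (1/2:ℝ) := by
        gcongr <;> simp_rw [← ENNReal.rpow_natCast _ 2] <;>
          exact (ENNReal.sum_le_tsum s).trans (le_of_eq (by norm_num))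


noncomputable def Qr (n : ℕ) (ν : Fin n → ℤ) : ℝ := 1 + ∑ i, ((ν i : ℝ)) ^ 2

lemma one_le_Qr (n : ℕ) (ν : Fin n → ℤ) : 1 ≤ Qr n ν := by
  have : (0:ℝ) ≤ ∑ i, ((ν i : ℝ)) ^ 2 := Finset.sum_nonneg fun i _ => sq_nonneg _
  simp [Qr]; linarith

lemma Qr_pos (n : ℕ) (ν : Fin n → ℤ) : 0 < Qr n ν := lt_of_lt_of_le one_pos (one_le_Qr n ν)

noncomputable def box (n m : ℕ) : Finset (Fin n → ℤ) :=
  Fintype.piFinset (fun _ => Finset.Icc (-(m:ℤ)) m)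

lemma card_box (n m : ℕ) : (box n m).card = (2*m+1)^n := by
  simp [box, Fintype.card_piFinset, Int.card_Icc]
  congr 1
  omega

lemma mem_box_of_Qr_le {n : ℕ} {ν : Fin n → ℤ} {t : ℝ} (h : Qr n ν ≤ t) :
    ν ∈ box n ⌊Real.sqrt t⌋₊ := by
  have ht0 : (0:ℝ) ≤ t := le_trans (by linarith [one_le_Qr n ν]) h
  simp only [box, Fintype.mem_piFinset, Finset.mem_Icc]
  intro i
  have h1 : ((ν i : ℝ)) ^ 2 ≤ t := by
    have hle : ((ν i : ℝ)) ^ 2 ≤ ∑ j, ((ν j : ℝ)) ^ 2 :=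
      Finset.single_le_sum (f := fun j => ((ν j : ℝ))^2) (fun j _ => sq_nonneg _)
        (Finset.mem_univ i)
    have := one_le_Qr n ν
    simp only [Qr] at h
    nlinarith
  have h2 : |(ν i : ℝ)| ≤ Real.sqrt t := Real.abs_le_sqrt h1
  have h3 : |ν i| ≤ (⌊Real.sqrt t⌋₊ : ℤ) := by
    have : ((|ν i|.toNat : ℕ) : ℝ) ≤ Real.sqrt t := by
      have : ((|ν i|.toNat : ℕ) : ℝ) = |(ν i : ℝ)| := by
        rw [← Int.cast_abs]
        exact_mod_cast congrArg Int.cast (Int.toNat_of_nonneg (abs_nonneg (ν i)))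
      rw [this]; exact h2
    have := Nat.le_floor this
    omega
  constructor <;> [skip; skip] <;> rw [abs_le] at h3 <;> [exact h3.1; exact h3.2]

lemma key (n : ℕ) (c : ℝ) (hc1 : -((n:ℝ)/2) < c) (hc2 : c < 0) :
    ∃ C : ℝ≥0∞, C ≠ ⊤ ∧ ∀ R : ℝ, 1 ≤ R →
      ∑' ν : Fin n → ℤ, (if Qr n ν ≤ R then ENNReal.ofReal (Qr n ν ^ c) else 0)
        ≤ C * ENNReal.ofReal (R ^ (c + (n:ℝ)/2)) := by
  set p : ℝ := c + (n:ℝ)/2 with hpdef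
  have hp : 0 < p := by rw [hpdef]; linarith
  set x : ℝ := (2:ℝ) ^ p with hxdef
  have hx1 : 1 < x := by
    rw [hxdef]
    exact (Real.one_lt_rpow_iff_of_pos (by norm_num)).mpr (Or.inl ⟨one_lt_two, hp⟩)
  have hx0 : 0 < x := lt_trans one_pos hx1
  set K : ℝ := 3^n * (2:ℝ) ^ ((n:ℝ)/2) with hKdef
  have hK0 : (0:ℝ) ≤ K := by
    apply mul_nonneg (by positivity) (Real.rpow_nonneg (by norm_num) _)
  refine ⟨ENNReal.ofReal (K * x / (x-1)), ENNReal.ofReal_ne_top, fun R hR => ?_⟩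
  have hpow : ∀ (j : ℕ) (e : ℝ), ((2:ℝ)^j) ^ e = ((2:ℝ) ^ e) ^ j := by
    intro j e
    rw [← Real.rpow_natCast 2 j, ← Real.rpow_mul (by norm_num), mul_comm,
      Real.rpow_mul (by norm_num), Real.rpow_natCast]
  -- Step A : layer bound
  have stepA : ∀ j : ℕ,
      (∑' ν : Fin n → ℤ, (if (2:ℝ)^j ≤ Qr n ν ∧ Qr n ν < 2^(j+1) ∧ Qr n ν ≤ R
          then ENNReal.ofReal (Qr n ν ^ c) else 0))
        ≤ if (2:ℝ)^j ≤ R then ENNReal.ofReal (K * x ^ j) else 0 := by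
    intro j
    by_cases h2R : (2:ℝ)^j ≤ R
    · rw [if_pos h2R]
      set m : ℕ := ⌊Real.sqrt ((2:ℝ)^(j+1))⌋₊ with hmdef
      have hbound : ∀ ν : Fin n → ℤ,
          (if (2:ℝ)^j ≤ Qr n ν ∧ Qr n ν < 2^(j+1) ∧ Qr n ν ≤ R
            then ENNReal.ofReal (Qr n ν ^ c) else 0)
          ≤ (if ν ∈ box n m then ENNReal.ofReal (((2:ℝ)^j) ^ c) else 0) := by
        intro ν
        by_cases hν : (2:ℝ)^j ≤ Qr n ν ∧ Qr n ν < 2^(j+1) ∧ Qr n ν ≤ R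
        · rw [if_pos hν, if_pos (mem_box_of_Qr_le hν.2.1.le)]
          exact ENNReal.ofReal_le_ofReal
            (Real.rpow_le_rpow_of_nonpos (by positivity) hν.1 hc2.le)
        · simp only [if_neg hν]; exact zero_le
      have h2j1 : (1:ℝ) ≤ (2:ℝ)^(j+1) := one_le_pow₀ (by norm_num)
      have hm : (m:ℝ) ≤ Real.sqrt ((2:ℝ)^(j+1)) := Nat.floor_le (Real.sqrt_nonneg _)
      have hs1 : (1:ℝ) ≤ Real.sqrt ((2:ℝ)^(j+1)) := by
        rw [show (1:ℝ) = Real.sqrt 1 from (Real.sqrt_one).symm]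
        exact Real.sqrt_le_sqrt h2j1
      have hcard : ((box n m).card : ℝ) ≤ 3^n * ((2:ℝ)^(j+1)) ^ ((n:ℝ)/2) := by
        rw [card_box]
        have hstep : ((2*m+1 : ℕ) : ℝ) ≤ 3 * Real.sqrt ((2:ℝ)^(j+1)) := by
          push_cast; linarith
        calc (((2*m+1)^n : ℕ) : ℝ) = ((2*m+1:ℕ):ℝ)^n := by push_cast; ring
          _ ≤ (3 * Real.sqrt ((2:ℝ)^(j+1)))^n := by
              exact pow_le_pow_left₀ (by positivity) hstep n
          _ = 3^n * (Real.sqrt ((2:ℝ)^(j+1)))^n := mul_pow _ _ _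
          _ = 3^n * ((2:ℝ)^(j+1)) ^ ((n:ℝ)/2) := by
              congr 1
              rw [Real.sqrt_eq_rpow, ← Real.rpow_natCast (((2:ℝ)^(j+1)) ^ ((1:ℝ)/2)) n,
                ← Real.rpow_mul (by positivity)]
              congr 1; ring
      have hval : ((2:ℝ)^(j+1)) ^ ((n:ℝ)/2) * ((2:ℝ)^j) ^ c = (2:ℝ) ^ ((n:ℝ)/2) * x^j := by
        rw [pow_succ, Real.mul_rpow (by positivity) (by norm_num),
          mul_comm (((2:ℝ)^j) ^ ((n:ℝ)/2)) _, mul_assoc,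
          ← Real.rpow_add (by positivity : (0:ℝ) < (2:ℝ)^j)]
        congr 1
        rw [show (n:ℝ)/2 + c = p from by rw [hpdef]; ring, hxdef]
        exact hpow j p
      calc (∑' ν : Fin n → ℤ, (if (2:ℝ)^j ≤ Qr n ν ∧ Qr n ν < 2^(j+1) ∧ Qr n ν ≤ R
              then ENNReal.ofReal (Qr n ν ^ c) else 0))
          ≤ ∑' ν : Fin n → ℤ, (if ν ∈ box n m then ENNReal.ofReal (((2:ℝ)^j)^c) else 0) :=
            ENNReal.tsum_le_tsum hbound
        _ = ∑ ν ∈ box n m, ENNReal.ofReal (((2:ℝ)^j)^c) := by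
            rw [tsum_eq_sum (fun ν hν => if_neg hν)]
            exact Finset.sum_congr rfl fun ν hν => if_pos hν
        _ = ((box n m).card : ℝ≥0∞) * ENNReal.ofReal (((2:ℝ)^j)^c) := by
            rw [Finset.sum_const, nsmul_eq_mul]
        _ ≤ ENNReal.ofReal (K * x ^ j) := by
            rw [← ENNReal.ofReal_natCast (box n m).card,
              ← ENNReal.ofReal_mul (Nat.cast_nonneg _)]
            apply ENNReal.ofReal_le_ofReal
            calc ((box n m).card : ℝ) * ((2:ℝ)^j)^c
                ≤ (3^n * ((2:ℝ)^(j+1)) ^ ((n:ℝ)/2)) * ((2:ℝ)^j)^c := by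
                  apply mul_le_mul_of_nonneg_right hcard (Real.rpow_nonneg (by positivity) _)
              _ = K * x^j := by rw [mul_assoc, hval, hKdef]; ring
    · rw [if_neg h2R]
      rw [nonpos_iff_eq_zero, ENNReal.tsum_eq_zero]
      intro ν
      rw [if_neg]
      rintro ⟨ha, _, hb⟩
      exact h2R (ha.trans hb)
  -- Step B
  set J : ℕ := Nat.log 2 ⌊R⌋₊ with hJdef
  have hfl : 1 ≤ ⌊R⌋₊ := Nat.le_floor (by exact_mod_cast hR)
  have h2JR : ((2:ℝ))^J ≤ R := by
    have h1 : (2:ℕ)^J ≤ ⌊R⌋₊ := Nat.pow_log_le_self 2 (by omega)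
    calc ((2:ℝ))^J = ((2^J : ℕ):ℝ) := by push_cast; ring
      _ ≤ (⌊R⌋₊ : ℝ) := by exact_mod_cast h1
      _ ≤ R := Nat.floor_le (by linarith)
  have hjJ : ∀ j : ℕ, (2:ℝ)^j ≤ R → j ≤ J := by
    intro j hj
    have h1 : ((2^j : ℕ):ℝ) ≤ R := by push_cast; exact_mod_cast hj
    have h2 : (2:ℕ)^j ≤ ⌊R⌋₊ := Nat.le_floor h1
    exact (Nat.le_log_iff_pow_le one_lt_two (by omega)).mpr h2
  calc ∑' ν : Fin n → ℤ, (if Qr n ν ≤ R then ENNReal.ofReal (Qr n ν ^ c) else 0)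
      ≤ ∑' ν : Fin n → ℤ, ∑' j : ℕ,
          (if (2:ℝ)^j ≤ Qr n ν ∧ Qr n ν < 2^(j+1) ∧ Qr n ν ≤ R
            then ENNReal.ofReal (Qr n ν ^ c) else 0) := by
        apply ENNReal.tsum_le_tsum; intro ν
        by_cases hν : Qr n ν ≤ R
        · rw [if_pos hν]
          obtain ⟨j, hj1, hj2⟩ : ∃ j:ℕ, (2:ℝ)^j ≤ Qr n ν ∧ Qr n ν < 2^(j+1) := by
            have hm1 : 1 ≤ ⌊Qr n ν⌋₊ := Nat.le_floor (by exact_mod_cast one_le_Qr n ν)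
            refine ⟨Nat.log 2 ⌊Qr n ν⌋₊, ?_, ?_⟩
            · calc ((2:ℝ))^(Nat.log 2 ⌊Qr n ν⌋₊) = ((2^(Nat.log 2 ⌊Qr n ν⌋₊):ℕ):ℝ) := by
                    push_cast; ring
                _ ≤ (⌊Qr n ν⌋₊:ℝ) := by exact_mod_cast Nat.pow_log_le_self 2 (by omega)
                _ ≤ Qr n ν := Nat.floor_le (Qr_pos n ν).le
            · have ha : Qr n ν < ⌊Qr n ν⌋₊ + 1 := Nat.lt_floor_add_one _
              have hb : ⌊Qr n ν⌋₊ + 1 ≤ 2^(Nat.log 2 ⌊Qr n ν⌋₊ + 1) :=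
                Nat.lt_pow_succ_log_self one_lt_two _
              calc Qr n ν < (⌊Qr n ν⌋₊:ℝ)+1 := ha
                _ ≤ ((2^(Nat.log 2 ⌊Qr n ν⌋₊ + 1):ℕ):ℝ) := by exact_mod_cast hb
                _ = _ := by push_cast; ring
          refine le_trans (le_of_eq ?_) (ENNReal.le_tsum j)
          rw [if_pos ⟨hj1, hj2, hν⟩]
        · simp only [if_neg hν]; exact zero_le
    _ = ∑' j : ℕ, ∑' ν : Fin n → ℤ,
          (if (2:ℝ)^j ≤ Qr n ν ∧ Qr n ν < 2^(j+1) ∧ Qr n ν ≤ R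
            then ENNReal.ofReal (Qr n ν ^ c) else 0) := ENNReal.tsum_comm
    _ ≤ ∑' j : ℕ, (if (2:ℝ)^j ≤ R then ENNReal.ofReal (K * x^j) else 0) :=
        ENNReal.tsum_le_tsum stepA
    _ ≤ ∑' j : ℕ, (if j ∈ Finset.range (J+1) then ENNReal.ofReal (K * x^j) else 0) := by
        apply ENNReal.tsum_le_tsum; intro j
        by_cases hj : (2:ℝ)^j ≤ R
        · rw [if_pos hj, if_pos (Finset.mem_range.mpr (Nat.lt_succ_of_le (hjJ j hj)))]
        · simp only [if_neg hj]; exact zero_le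
    _ = ∑ j ∈ Finset.range (J+1), ENNReal.ofReal (K * x^j) := by
        rw [tsum_eq_sum (fun j hj => if_neg hj)]
        exact Finset.sum_congr rfl fun j hj => if_pos hj
    _ = ENNReal.ofReal (∑ j ∈ Finset.range (J+1), K * x^j) :=
        (ENNReal.ofReal_sum_of_nonneg (fun j _ => by positivity)).symm
    _ ≤ ENNReal.ofReal (K * x/(x-1)) * ENNReal.ofReal (R ^ p) := by
        rw [← ENNReal.ofReal_mul (div_nonneg (mul_nonneg hK0 hx0.le) (by linarith))]
        apply ENNReal.ofReal_le_ofReal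
        rw [← Finset.mul_sum, geom_sum_eq (ne_of_gt hx1)]
        have hx1' : (0:ℝ) < x - 1 := by linarith
        have hxJ : x^J ≤ R^p := by
          have h := Real.rpow_le_rpow (by positivity) h2JR hp.le
          rwa [hpow J p, ← hxdef] at h
        calc K * ((x^(J+1) - 1)/(x-1))
            ≤ K * (x^(J+1)/(x-1)) := by
              apply mul_le_mul_of_nonneg_left _ hK0
              exact (div_le_div_iff_of_pos_right hx1').mpr (by linarith)
          _ = (K * x/(x-1)) * x^J := by rw [pow_succ]; field_simp
          _ ≤ (K * x/(x-1)) * R^p := by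
              apply mul_le_mul_of_nonneg_left hxJ
              exact div_nonneg (mul_nonneg hK0 hx0.le) hx1'.le

lemma sq_rpow_half (x : ℝ≥0∞) : (x ^ (1/2:ℝ)) ^ 2 = x := by
  rw [← ENNReal.rpow_natCast (x ^ (1/2:ℝ)) 2, ← ENNReal.rpow_mul]
  norm_num

lemma add_sq_le_four (a b : ℝ≥0∞) : (a+b)^2 ≤ 4*(a^2 + b^2) := by
  rcases le_total a b with h|h
  · calc (a+b)^2 ≤ (b+b)^2 := by gcongr
      _ = 4*b^2 := by ring
      _ ≤ 4*(a^2+b^2) := by gcongr; exact le_add_self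
  · calc (a+b)^2 ≤ (a+a)^2 := by gcongr
      _ = 4*a^2 := by ring
      _ ≤ 4*(a^2+b^2) := by gcongr; exact le_self_add

lemma ofReal_Q_mul (n : ℕ) (ν : Fin n → ℤ) (u v : ℝ) :
    ENNReal.ofReal (Qr n ν ^ u) * ENNReal.ofReal (Qr n ν ^ v)
      = ENNReal.ofReal (Qr n ν ^ (u+v)) := by
  rw [← ENNReal.ofReal_mul (Real.rpow_nonneg (Qr_pos n ν).le _),
    ← Real.rpow_add (Qr_pos n ν)]

lemma jw_sq (n : ℕ) (a : ℝ) (ν : Fin n → ℤ) :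
    jweight n a ν * jweight n a ν = ENNReal.ofReal (Qr n ν ^ a) := by
  rw [show jweight n a ν = ENNReal.ofReal (Qr n ν ^ (a/2)) from rfl, ofReal_Q_mul]
  norm_num

theorem stmt_0 (n : ℕ) (hn : 1 ≤ n) (a₁ a₂ : ℝ) (h₁ : a₁ < 0) (h₂ : a₂ < 0)
    (hsum : a₁ + a₂ = -(n : ℝ) / 2) :
    ∃ C : ℝ≥0∞, 0 < C ∧ C < ⊤ ∧
      ∀ A₁ A₂ : (Fin n → ℤ) → ℝ≥0∞,
        (∑' μ : Fin n → ℤ,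
            (∑' ν : Fin n → ℤ,
              jweight n a₁ ν * jweight n a₂ (μ - ν) * A₁ ν * A₂ (μ - ν)) ^ 2) ^ (1/2 : ℝ)
          ≤ C * (∑' ν, (A₁ ν) ^ 2) ^ (1/2 : ℝ) * (∑' ν, (A₂ ν) ^ 2) ^ (1/2 : ℝ) := by
  have ha₁ : -((n:ℝ)/2) < a₁ := by linarith
  have ha₂ : -((n:ℝ)/2) < a₂ := by linarith
  obtain ⟨C₁, hC₁top, hkey₁⟩ := key n a₁ ha₁ h₁
  obtain ⟨C₂, hC₂top, hkey₂⟩ := key n a₂ ha₂ h₂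
  have hbd₁ : ∀ η : Fin n → ℤ, ENNReal.ofReal (Qr n η ^ a₂) *
      (∑' ν : Fin n → ℤ, (if Qr n ν ≤ Qr n η then ENNReal.ofReal (Qr n ν ^ a₁) else 0))
        ≤ C₁ := by
    intro η
    calc _ ≤ ENNReal.ofReal (Qr n η ^ a₂) * (C₁ * ENNReal.ofReal (Qr n η ^ (a₁ + (n:ℝ)/2))) :=
          mul_le_mul_right (hkey₁ (Qr n η) (one_le_Qr n η)) _
      _ = C₂ * 0 + C₁ * (ENNReal.ofReal (Qr n η ^ a₂) * ENNReal.ofReal (Qr n η ^ (a₁ + (n:ℝ)/2))) := by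
          ring
      _ = C₁ := by
          rw [ofReal_Q_mul, show a₂ + (a₁ + (n:ℝ)/2) = 0 from by linarith, Real.rpow_zero,
            ENNReal.ofReal_one, mul_one, mul_zero, zero_add]
  have hbd₂ : ∀ ν : Fin n → ℤ, ENNReal.ofReal (Qr n ν ^ a₁) *
      (∑' η : Fin n → ℤ, (if Qr n η < Qr n ν then ENNReal.ofReal (Qr n η ^ a₂) else 0))
        ≤ C₂ := by
    intro ν
    have hmono : (∑' η : Fin n → ℤ, (if Qr n η < Qr n ν then ENNReal.ofReal (Qr n η ^ a₂) else 0))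
        ≤ ∑' η : Fin n → ℤ, (if Qr n η ≤ Qr n ν then ENNReal.ofReal (Qr n η ^ a₂) else 0) := by
      apply ENNReal.tsum_le_tsum; intro η
      by_cases h : Qr n η < Qr n ν
      · rw [if_pos h, if_pos h.le]
      · rw [if_neg h]; exact zero_le
    calc _ ≤ ENNReal.ofReal (Qr n ν ^ a₁) * (C₂ * ENNReal.ofReal (Qr n ν ^ (a₂ + (n:ℝ)/2))) :=
          mul_le_mul_right (hmono.trans (hkey₂ (Qr n ν) (one_le_Qr n ν))) _
      _ = C₁ * 0 + C₂ * (ENNReal.ofReal (Qr n ν ^ a₁) * ENNReal.ofReal (Qr n ν ^ (a₂ + (n:ℝ)/2))) := by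
          ring
      _ = C₂ := by
          rw [ofReal_Q_mul, show a₁ + (a₂ + (n:ℝ)/2) = 0 from by linarith, Real.rpow_zero,
            ENNReal.ofReal_one, mul_one, mul_zero, zero_add]
  have hDne : (4*(C₁+C₂)+1 : ℝ≥0∞) ≠ ⊤ := by
    refine ENNReal.add_ne_top.mpr ⟨ENNReal.mul_ne_top (by norm_num)
      (ENNReal.add_ne_top.mpr ⟨hC₁top, hC₂top⟩), ENNReal.one_ne_top⟩
  refine ⟨(4*(C₁+C₂)+1 : ℝ≥0∞) ^ (1/2:ℝ), ?_, ?_, ?_⟩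
  · exact ENNReal.rpow_pos (lt_of_lt_of_le zero_lt_one le_add_self) hDne
  · exact ENNReal.rpow_lt_top_of_nonneg (by norm_num) hDne
  intro A₁ A₂
  set S₁ : ℝ≥0∞ := ∑' ν, (A₁ ν) ^ 2 with hS₁
  set S₂ : ℝ≥0∞ := ∑' ν, (A₂ ν) ^ 2 with hS₂
  set F₁ : (Fin n → ℤ) → ℝ≥0∞ := fun μ => ∑' ν : Fin n → ℤ,
    (if Qr n ν ≤ Qr n (μ - ν)
      then jweight n a₁ ν * jweight n a₂ (μ-ν) * A₁ ν * A₂ (μ-ν) else 0) with hF₁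
  set F₂ : (Fin n → ℤ) → ℝ≥0∞ := fun μ => ∑' ν : Fin n → ℤ,
    (if ¬ (Qr n ν ≤ Qr n (μ - ν))
      then jweight n a₁ ν * jweight n a₂ (μ-ν) * A₁ ν * A₂ (μ-ν) else 0) with hF₂
  -- squared pointwise bounds
  have cs₁ : ∀ μ, F₁ μ ^ 2 ≤ S₁ * (∑' ν : Fin n → ℤ,
      (if Qr n ν ≤ Qr n (μ-ν)
        then ENNReal.ofReal (Qr n ν ^ a₁) * ENNReal.ofReal (Qr n (μ-ν) ^ a₂) * A₂ (μ-ν)^2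
        else 0)) := by
    intro μ
    have h1 : F₁ μ = ∑' ν : Fin n → ℤ, A₁ ν *
        (if Qr n ν ≤ Qr n (μ-ν)
          then jweight n a₁ ν * jweight n a₂ (μ-ν) * A₂ (μ-ν) else 0) := by
      rw [hF₁]
      refine tsum_congr fun ν => ?_
      by_cases h : Qr n ν ≤ Qr n (μ-ν)
      · rw [if_pos h, if_pos h]; ring
      · rw [if_neg h, if_neg h, mul_zero]
    have h2 := tsum_cs (fun ν => A₁ ν)
      (fun ν => (if Qr n ν ≤ Qr n (μ-ν)
        then jweight n a₁ ν * jweight n a₂ (μ-ν) * A₂ (μ-ν) else 0))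
    rw [← h1] at h2
    have hsq : ∀ ν : Fin n → ℤ,
        (if Qr n ν ≤ Qr n (μ-ν)
          then jweight n a₁ ν * jweight n a₂ (μ-ν) * A₂ (μ-ν) else 0) ^ 2
        = (if Qr n ν ≤ Qr n (μ-ν)
            then ENNReal.ofReal (Qr n ν ^ a₁) * ENNReal.ofReal (Qr n (μ-ν) ^ a₂) * A₂ (μ-ν)^2
            else 0) := by
      intro ν
      by_cases h : Qr n ν ≤ Qr n (μ-ν)
      · rw [if_pos h, if_pos h, mul_pow, mul_pow, sq (jweight n a₁ ν),
          sq (jweight n a₂ (μ-ν)), jw_sq, jw_sq]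
      · rw [if_neg h, if_neg h]; exact zero_pow (by norm_num)
    calc F₁ μ ^ 2 ≤ (S₁ ^ (1/2:ℝ) * (∑' ν : Fin n → ℤ,
          (if Qr n ν ≤ Qr n (μ-ν)
            then jweight n a₁ ν * jweight n a₂ (μ-ν) * A₂ (μ-ν) else 0) ^ 2) ^ (1/2:ℝ)) ^ 2 := by
          gcongr
      _ = S₁ * ∑' ν : Fin n → ℤ,
          (if Qr n ν ≤ Qr n (μ-ν)
            then jweight n a₁ ν * jweight n a₂ (μ-ν) * A₂ (μ-ν) else 0) ^ 2 := by
          rw [mul_pow, sq_rpow_half, sq_rpow_half]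
      _ = _ := by rw [tsum_congr hsq]
  have cs₂ : ∀ μ, F₂ μ ^ 2 ≤ S₂ * (∑' ν : Fin n → ℤ,
      (if ¬ (Qr n ν ≤ Qr n (μ-ν))
        then ENNReal.ofReal (Qr n ν ^ a₁) * ENNReal.ofReal (Qr n (μ-ν) ^ a₂) * A₁ ν ^2
        else 0)) := by
    intro μ
    have h1 : F₂ μ = ∑' ν : Fin n → ℤ, A₂ (μ - ν) *
        (if ¬ (Qr n ν ≤ Qr n (μ-ν))
          then jweight n a₁ ν * jweight n a₂ (μ-ν) * A₁ ν else 0) := by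
      rw [hF₂]
      refine tsum_congr fun ν => ?_
      by_cases h : Qr n ν ≤ Qr n (μ-ν)
      · simp only [h, not_true_eq_false, if_false, mul_zero]
      · simp only [h, not_false_eq_true, if_true]; ring
    have h2 := tsum_cs (fun ν => A₂ (μ - ν))
      (fun ν => (if ¬ (Qr n ν ≤ Qr n (μ-ν))
        then jweight n a₁ ν * jweight n a₂ (μ-ν) * A₁ ν else 0))
    rw [← h1] at h2
    have hshift : (∑' ν : Fin n → ℤ, A₂ (μ - ν) ^ 2) = S₂ := by
      have := (Equiv.subLeft μ).tsum_eq (fun η => A₂ η ^ 2)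
      simpa [Equiv.subLeft_apply] using this
    rw [hshift] at h2
    have hsq : ∀ ν : Fin n → ℤ,
        (if ¬ (Qr n ν ≤ Qr n (μ-ν))
          then jweight n a₁ ν * jweight n a₂ (μ-ν) * A₁ ν else 0) ^ 2
        = (if ¬ (Qr n ν ≤ Qr n (μ-ν))
            then ENNReal.ofReal (Qr n ν ^ a₁) * ENNReal.ofReal (Qr n (μ-ν) ^ a₂) * A₁ ν^2
            else 0) := by
      intro ν
      by_cases h : Qr n ν ≤ Qr n (μ-ν)
      · simp only [h, not_true_eq_false, if_false]; exact zero_pow (by norm_num)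
      · simp only [h, not_false_eq_true, if_true]
        rw [mul_pow, mul_pow, sq (jweight n a₁ ν), sq (jweight n a₂ (μ-ν)), jw_sq, jw_sq]
    calc F₂ μ ^ 2 ≤ (S₂ ^ (1/2:ℝ) * (∑' ν : Fin n → ℤ,
          (if ¬ (Qr n ν ≤ Qr n (μ-ν))
            then jweight n a₁ ν * jweight n a₂ (μ-ν) * A₁ ν else 0) ^ 2) ^ (1/2:ℝ)) ^ 2 := by
          gcongr
      _ = S₂ * ∑' ν : Fin n → ℤ,
          (if ¬ (Qr n ν ≤ Qr n (μ-ν))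
            then jweight n a₁ ν * jweight n a₂ (μ-ν) * A₁ ν else 0) ^ 2 := by
          rw [mul_pow, sq_rpow_half, sq_rpow_half]
      _ = _ := by rw [tsum_congr hsq]
  -- summed bounds
  have sum₁ : (∑' μ : Fin n → ℤ, ∑' ν : Fin n → ℤ,
      (if Qr n ν ≤ Qr n (μ-ν)
        then ENNReal.ofReal (Qr n ν ^ a₁) * ENNReal.ofReal (Qr n (μ-ν) ^ a₂) * A₂ (μ-ν)^2
        else 0)) ≤ C₁ * S₂ := by
    rw [ENNReal.tsum_comm]
    have hsub : ∀ ν : Fin n → ℤ, (∑' μ : Fin n → ℤ,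
        (if Qr n ν ≤ Qr n (μ-ν)
          then ENNReal.ofReal (Qr n ν ^ a₁) * ENNReal.ofReal (Qr n (μ-ν) ^ a₂) * A₂ (μ-ν)^2
          else 0))
        = ∑' η : Fin n → ℤ,
          (if Qr n ν ≤ Qr n η
            then ENNReal.ofReal (Qr n ν ^ a₁) * ENNReal.ofReal (Qr n η ^ a₂) * A₂ η^2
            else 0) := by
      intro ν
      have := (Equiv.subRight ν).tsum_eq (fun η =>
        (if Qr n ν ≤ Qr n η
          then ENNReal.ofReal (Qr n ν ^ a₁) * ENNReal.ofReal (Qr n η ^ a₂) * A₂ η^2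
          else 0))
      simpa [Equiv.subRight_apply] using this
    rw [tsum_congr hsub, ENNReal.tsum_comm]
    have hfac : ∀ η : Fin n → ℤ, (∑' ν : Fin n → ℤ,
        (if Qr n ν ≤ Qr n η
          then ENNReal.ofReal (Qr n ν ^ a₁) * ENNReal.ofReal (Qr n η ^ a₂) * A₂ η^2
          else 0)) ≤ C₁ * A₂ η ^ 2 := by
      intro η
      have heq : (∑' ν : Fin n → ℤ,
          (if Qr n ν ≤ Qr n η
            then ENNReal.ofReal (Qr n ν ^ a₁) * ENNReal.ofReal (Qr n η ^ a₂) * A₂ η^2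
            else 0))
          = (ENNReal.ofReal (Qr n η ^ a₂) *
              ∑' ν : Fin n → ℤ, (if Qr n ν ≤ Qr n η then ENNReal.ofReal (Qr n ν ^ a₁) else 0))
            * A₂ η ^ 2 := by
        rw [← ENNReal.tsum_mul_left, ← ENNReal.tsum_mul_right]
        refine tsum_congr fun ν => ?_
        by_cases h : Qr n ν ≤ Qr n η
        · rw [if_pos h, if_pos h]; ring
        · rw [if_neg h, if_neg h, mul_zero, zero_mul]
      rw [heq]
      exact mul_le_mul_left (hbd₁ η) _
    calc _ ≤ ∑' η : Fin n → ℤ, C₁ * A₂ η ^ 2 := ENNReal.tsum_le_tsum hfac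
      _ = C₁ * S₂ := by rw [ENNReal.tsum_mul_left]
  have sum₂ : (∑' μ : Fin n → ℤ, ∑' ν : Fin n → ℤ,
      (if ¬ (Qr n ν ≤ Qr n (μ-ν))
        then ENNReal.ofReal (Qr n ν ^ a₁) * ENNReal.ofReal (Qr n (μ-ν) ^ a₂) * A₁ ν^2
        else 0)) ≤ C₂ * S₁ := by
    rw [ENNReal.tsum_comm]
    have hsub : ∀ ν : Fin n → ℤ, (∑' μ : Fin n → ℤ,
        (if ¬ (Qr n ν ≤ Qr n (μ-ν))
          then ENNReal.ofReal (Qr n ν ^ a₁) * ENNReal.ofReal (Qr n (μ-ν) ^ a₂) * A₁ ν^2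
          else 0))
        = ∑' η : Fin n → ℤ,
          (if ¬ (Qr n ν ≤ Qr n η)
            then ENNReal.ofReal (Qr n ν ^ a₁) * ENNReal.ofReal (Qr n η ^ a₂) * A₁ ν^2
            else 0) := by
      intro ν
      have := (Equiv.subRight ν).tsum_eq (fun η =>
        (if ¬ (Qr n ν ≤ Qr n η)
          then ENNReal.ofReal (Qr n ν ^ a₁) * ENNReal.ofReal (Qr n η ^ a₂) * A₁ ν^2
          else 0))
      simpa [Equiv.subRight_apply] using this
    rw [tsum_congr hsub]
    have hfac : ∀ ν : Fin n → ℤ, (∑' η : Fin n → ℤ,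
        (if ¬ (Qr n ν ≤ Qr n η)
          then ENNReal.ofReal (Qr n ν ^ a₁) * ENNReal.ofReal (Qr n η ^ a₂) * A₁ ν^2
          else 0)) ≤ C₂ * A₁ ν ^ 2 := by
      intro ν
      have heq : (∑' η : Fin n → ℤ,
          (if ¬ (Qr n ν ≤ Qr n η)
            then ENNReal.ofReal (Qr n ν ^ a₁) * ENNReal.ofReal (Qr n η ^ a₂) * A₁ ν^2
            else 0))
          = (ENNReal.ofReal (Qr n ν ^ a₁) *
              ∑' η : Fin n → ℤ, (if Qr n η < Qr n ν then ENNReal.ofReal (Qr n η ^ a₂) else 0))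
            * A₁ ν ^ 2 := by
        rw [← ENNReal.tsum_mul_left, ← ENNReal.tsum_mul_right]
        refine tsum_congr fun η => ?_
        by_cases h : Qr n ν ≤ Qr n η
        · simp only [h, not_true_eq_false, if_false, not_lt.mpr h, mul_zero, zero_mul]
        · simp only [h, not_false_eq_true, if_true, if_pos (not_le.mp h)]
          try ring
      rw [heq]
      exact mul_le_mul_left (hbd₂ ν) _
    calc _ ≤ ∑' ν : Fin n → ℤ, C₂ * A₁ ν ^ 2 := ENNReal.tsum_le_tsum hfac
      _ = C₂ * S₁ := by rw [ENNReal.tsum_mul_left]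
  -- combine
  have hsplit : ∀ μ : Fin n → ℤ, (∑' ν : Fin n → ℤ,
      jweight n a₁ ν * jweight n a₂ (μ - ν) * A₁ ν * A₂ (μ - ν)) = F₁ μ + F₂ μ := by
    intro μ
    rw [hF₁, hF₂, ← ENNReal.tsum_add]
    refine tsum_congr fun ν => ?_
    by_cases h : Qr n ν ≤ Qr n (μ-ν)
    · simp [h]
    · simp [h]
  have hmain : (∑' μ : Fin n → ℤ, (∑' ν : Fin n → ℤ,
      jweight n a₁ ν * jweight n a₂ (μ - ν) * A₁ ν * A₂ (μ - ν)) ^ 2)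
      ≤ (4*(C₁+C₂)+1) * S₁ * S₂ := by
    calc (∑' μ : Fin n → ℤ, (∑' ν : Fin n → ℤ,
          jweight n a₁ ν * jweight n a₂ (μ - ν) * A₁ ν * A₂ (μ - ν)) ^ 2)
        = ∑' μ : Fin n → ℤ, (F₁ μ + F₂ μ) ^ 2 := tsum_congr fun μ => congrArg (· ^ 2) (hsplit μ)
      _ ≤ ∑' μ : Fin n → ℤ, 4 * (F₁ μ ^ 2 + F₂ μ ^ 2) :=
          ENNReal.tsum_le_tsum fun μ => add_sq_le_four _ _
      _ = 4 * ((∑' μ, F₁ μ ^ 2) + ∑' μ, F₂ μ ^ 2) := by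
          rw [ENNReal.tsum_mul_left, ENNReal.tsum_add]
      _ ≤ 4 * ((S₁ * (C₁ * S₂)) + S₂ * (C₂ * S₁)) := by
          gcongr
          · calc (∑' μ, F₁ μ ^ 2) ≤ ∑' μ : Fin n → ℤ, S₁ * (∑' ν : Fin n → ℤ,
                (if Qr n ν ≤ Qr n (μ-ν)
                  then ENNReal.ofReal (Qr n ν ^ a₁) * ENNReal.ofReal (Qr n (μ-ν) ^ a₂) * A₂ (μ-ν)^2
                  else 0)) := ENNReal.tsum_le_tsum cs₁
              _ = S₁ * _ := ENNReal.tsum_mul_left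
              _ ≤ S₁ * (C₁ * S₂) := mul_le_mul_right sum₁ _
          · calc (∑' μ, F₂ μ ^ 2) ≤ ∑' μ : Fin n → ℤ, S₂ * (∑' ν : Fin n → ℤ,
                (if ¬ (Qr n ν ≤ Qr n (μ-ν))
                  then ENNReal.ofReal (Qr n ν ^ a₁) * ENNReal.ofReal (Qr n (μ-ν) ^ a₂) * A₁ ν^2
                  else 0)) := ENNReal.tsum_le_tsum cs₂
              _ = S₂ * _ := ENNReal.tsum_mul_left
              _ ≤ S₂ * (C₂ * S₁) := mul_le_mul_right sum₂ _
      _ = (4*(C₁+C₂)) * S₁ * S₂ := by ring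
      _ ≤ (4*(C₁+C₂)+1) * S₁ * S₂ := by
          exact mul_le_mul_left (mul_le_mul_left le_self_add _) _
  calc (∑' μ : Fin n → ℤ, (∑' ν : Fin n → ℤ,
        jweight n a₁ ν * jweight n a₂ (μ - ν) * A₁ ν * A₂ (μ - ν)) ^ 2) ^ (1/2:ℝ)
      ≤ ((4*(C₁+C₂)+1) * S₁ * S₂) ^ (1/2:ℝ) := ENNReal.rpow_le_rpow hmain (by norm_num)
    _ = (4*(C₁+C₂)+1) ^ (1/2:ℝ) * S₁ ^ (1/2:ℝ) * S₂ ^ (1/2:ℝ) := by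
        rw [ENNReal.mul_rpow_of_nonneg _ _ (by norm_num),
          ENNReal.mul_rpow_of_nonneg _ _ (by norm_num)]
end

section
/- Let $a_1, a_2 < 0$ with $a_1 + a_2 = -n/2$, and let $V(\nu_1, \nu_2) = \langle \nu_1 + \nu_2 \rangle^{a_1} \langle \nu_2 \rangle^{a_2}$ on $\mathbb{Z}^n \times \mathbb{Z}^n$. Then there is $C > 0$ such that for all nonnegative $A_1, A_2$ on $\mathbb{Z}^n$, $\left\| \sum_{\nu_1 + \nu_2 = \mu} V(\nu_1,\nu_2) A_1(\nu_1) A_2(\nu_2) \right\|_{\ell^2_\mu(\mathbb{Z}^n)} \le C \|A_1\|_{\ell^2(\mathbb{Z}^n)} \|A_2\|_{\ell^2(\mathbb{Z}^n)}$. -/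
open scoped ENNReal

lemma tsum_cauchy_schwarz {α : Type*} [Countable α] (f g : α → ℝ≥0∞) :
    ∑' x, f x * g x ≤ (∑' x, f x ^ 2) ^ (1/2 : ℝ) * (∑' x, g x ^ 2) ^ (1/2 : ℝ) := by
  letI : MeasurableSpace α := ⊤
  haveI : MeasurableSingletonClass α := ⟨fun _ => trivial⟩
  have hm : ∀ h : α → ℝ≥0∞, Measurable h := fun h s _ => trivial
  have h22 : Real.HolderConjugate 2 2 := Real.holderConjugate_iff.mpr ⟨one_lt_two, by norm_num⟩
  have key := ENNReal.lintegral_mul_le_Lp_mul_Lq (MeasureTheory.Measure.count (α := α))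
    h22 (hm f).aemeasurable (hm g).aemeasurable
  simp only [MeasureTheory.lintegral_count] at key
  calc ∑' x, f x * g x ≤ (∑' x, f x ^ (2:ℝ)) ^ (1/(2:ℝ)) * (∑' x, g x ^ (2:ℝ)) ^ (1/(2:ℝ)) := key
  _ = (∑' x, f x ^ 2) ^ (1/2 : ℝ) * (∑' x, g x ^ 2) ^ (1/2 : ℝ) := by
      congr 1 <;> congr 1 <;> exact tsum_congr fun x => by
        rw [← ENNReal.rpow_natCast]; norm_num

lemma sqrt_sq (x : ℝ≥0∞) : (x ^ 2) ^ (1/2 : ℝ) = x := by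
  rw [← ENNReal.rpow_natCast x 2, ← ENNReal.rpow_mul]; norm_num

lemma sq_sqrt (x : ℝ≥0∞) : (x ^ (1/2 : ℝ)) ^ 2 = x := by
  rw [← ENNReal.rpow_natCast _ 2, ← ENNReal.rpow_mul]; norm_num

lemma sqrt_le_sqrt {x y : ℝ≥0∞} (h : x ≤ y) : x ^ (1/2:ℝ) ≤ y ^ (1/2:ℝ) :=
  ENNReal.rpow_le_rpow h (by norm_num)

lemma tsum_minkowski {α : Type*} [Countable α] (f : ℕ → α → ℝ≥0∞) :
    (∑' x, (∑' k, f k x) ^ 2) ^ (1/2:ℝ) ≤ ∑' k, (∑' x, f k x ^ 2) ^ (1/2:ℝ) := by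
  have pt : ∀ x, (∑' k, f k x) ^ 2 = ∑' (k) (l), f k x * f l x := by
    intro x
    rw [sq, ← ENNReal.tsum_mul_right]
    exact tsum_congr fun k => (ENNReal.tsum_mul_left).symm
  have expand : ∑' x, (∑' k, f k x) ^ 2 = ∑' (k) (l) (x), f k x * f l x := by
    simp_rw [pt]
    rw [ENNReal.tsum_comm (f := fun x k => ∑' l, f k x * f l x)]
    exact tsum_congr fun k => ENNReal.tsum_comm
  have hle : ∑' x, (∑' k, f k x) ^ 2 ≤ (∑' k, (∑' x, f k x ^ 2) ^ (1/2:ℝ)) ^ 2 := by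
    rw [expand, sq, ← ENNReal.tsum_mul_right]
    refine ENNReal.tsum_le_tsum fun k => ?_
    rw [← ENNReal.tsum_mul_left]
    refine ENNReal.tsum_le_tsum fun l => ?_
    exact tsum_cauchy_schwarz (f k) (f l)
  calc (∑' x, (∑' k, f k x) ^ 2) ^ (1/2:ℝ)
      ≤ (((∑' k, (∑' x, f k x ^ 2) ^ (1/2:ℝ))) ^ 2) ^ (1/2:ℝ) := sqrt_le_sqrt hle
    _ = _ := sqrt_sq _

/-- distance on ℕ -/
def ddist (j k : ℕ) : ℕ := (j - k) + (k - j)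

lemma tsum_pow_ddist_le (ρ : ℝ≥0∞) (hρ : ρ ≤ 1) (j : ℕ) :
    ∑' k, ρ ^ ddist j k ≤ 2 * (1 - ρ)⁻¹ := by
  rw [← Summable.sum_add_tsum_nat_add' (f := fun k => ρ ^ ddist j k) (k := j+1) ENNReal.summable]
  have h1 : ∑ k ∈ Finset.range (j+1), ρ ^ ddist j k ≤ (1 - ρ)⁻¹ := by
    have : ∀ k ∈ Finset.range (j+1), ρ ^ ddist j k = ρ ^ (j - k) := by
      intro k hk
      rw [Finset.mem_range] at hk
      have : k - j = 0 := by omega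
      simp [ddist, this]
    rw [Finset.sum_congr rfl this]
    have := Finset.sum_range_reflect (fun i => ρ ^ i) (j+1)
    simp only [Nat.add_sub_cancel] at this
    rw [this]
    exact le_trans (ENNReal.sum_le_tsum _) (le_of_eq (ENNReal.tsum_geometric ρ))
  have h2 : ∑' i : ℕ, ρ ^ ddist j (i + (j+1)) ≤ (1 - ρ)⁻¹ := by
    have : ∀ i : ℕ, ρ ^ ddist j (i + (j+1)) ≤ ρ ^ i := by
      intro i
      have hd : ddist j (i + (j+1)) = i + 1 := by simp [ddist]; omega
      rw [hd, pow_succ]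
      exact mul_le_of_le_one_right zero_le hρ
    exact le_trans (ENNReal.tsum_le_tsum this) (le_of_eq (ENNReal.tsum_geometric ρ))
  calc _ ≤ (1-ρ)⁻¹ + (1-ρ)⁻¹ := add_le_add h1 h2
    _ = 2 * (1-ρ)⁻¹ := (two_mul _).symm

lemma schur (ρ : ℝ≥0∞) (hρ : ρ ≤ 1) (b : ℕ → ℝ≥0∞) :
    ∑' j, (∑' k, ρ ^ ddist j k * b k) ^ 2 ≤ (2 * (1-ρ)⁻¹)^2 * ∑' k, b k ^ 2 := by
  set K := 2 * (1-ρ)⁻¹ with hK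
  have step1 : ∀ j, (∑' k, ρ ^ ddist j k * b k) ^ 2 ≤ K * ∑' k, ρ ^ ddist j k * b k ^ 2 := by
    intro j
    have hsplit : ∀ k, ρ ^ ddist j k * b k
        = (ρ ^ ddist j k) ^ (1/2:ℝ) * ((ρ ^ ddist j k) ^ (1/2:ℝ) * b k) := by
      intro k
      rw [← mul_assoc, ← ENNReal.rpow_add_of_nonneg _ _ (by norm_num) (by norm_num)]
      norm_num
    calc (∑' k, ρ ^ ddist j k * b k) ^ 2
        = (∑' k, (ρ ^ ddist j k) ^ (1/2:ℝ) * ((ρ ^ ddist j k) ^ (1/2:ℝ) * b k)) ^ 2 := by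
          rw [tsum_congr hsplit]
      _ ≤ ((∑' k, ((ρ ^ ddist j k) ^ (1/2:ℝ))^2) ^ (1/2:ℝ)
            * (∑' k, ((ρ ^ ddist j k) ^ (1/2:ℝ) * b k)^2) ^ (1/2:ℝ)) ^ 2 := by
          exact pow_le_pow_left' (tsum_cauchy_schwarz _ _) 2
      _ = (∑' k, ((ρ ^ ddist j k) ^ (1/2:ℝ))^2) * (∑' k, ((ρ ^ ddist j k) ^ (1/2:ℝ) * b k)^2) := by
          rw [mul_pow, sq_sqrt, sq_sqrt]
      _ = (∑' k, ρ ^ ddist j k) * (∑' k, ρ ^ ddist j k * b k ^ 2) := by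
          congr 1
          · exact tsum_congr fun k => sq_sqrt _
          · exact tsum_congr fun k => by rw [mul_pow, sq_sqrt]
      _ ≤ K * ∑' k, ρ ^ ddist j k * b k ^ 2 :=
          mul_le_mul_left (tsum_pow_ddist_le ρ hρ j) _
  calc ∑' j, (∑' k, ρ ^ ddist j k * b k) ^ 2
      ≤ ∑' j, K * ∑' k, ρ ^ ddist j k * b k ^ 2 := ENNReal.tsum_le_tsum step1
    _ = K * ∑' k, (b k ^ 2 * ∑' j, ρ ^ ddist j k) := by
        rw [ENNReal.tsum_mul_left]
        congr 1
        rw [ENNReal.tsum_comm]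
        refine tsum_congr fun k => ?_
        rw [← ENNReal.tsum_mul_left]
        exact tsum_congr fun j => mul_comm _ _
    _ ≤ K * ∑' k, (b k ^ 2 * K) := by
        refine mul_le_mul_right (ENNReal.tsum_le_tsum fun k => mul_le_mul_right ?_ _) _
        have hsym : ∀ j, ddist j k = ddist k j := fun j => by simp [ddist]; omega
        calc ∑' j, ρ ^ ddist j k = ∑' j, ρ ^ ddist k j := tsum_congr fun j => by rw [hsym]
          _ ≤ K := tsum_pow_ddist_le ρ hρ k
    _ = K^2 * ∑' k, b k ^ 2 := by
        rw [tsum_congr (fun k => mul_comm (b k ^2) K), ENNReal.tsum_mul_left, sq, mul_assoc, hK]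
        ring


/-- integer squared bracket -/
def Qn (n : ℕ) (ν : Fin n → ℤ) : ℕ := 1 + ∑ i, (ν i).natAbs ^ 2

/-- dyadic shell index -/
def shl (n : ℕ) (ν : Fin n → ℤ) : ℕ := Nat.log 2 (Qn n ν)

lemma Qn_pos (n : ℕ) (ν : Fin n → ℤ) : 0 < Qn n ν := Nat.succ_le.mp (Nat.le_add_right 1 _)

lemma jweight_eq (n : ℕ) (a : ℝ) (ν : Fin n → ℤ) :
    jweight n a ν = ((Qn n ν : ℝ≥0∞)) ^ (a/2) := by
  have hg : (1 + ∑ i, ((ν i : ℝ)) ^ 2) = ((Qn n ν : ℕ) : ℝ) := by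
    rw [Qn]; push_cast [Nat.cast_natAbs]
    congr 1
    refine Finset.sum_congr rfl fun i _ => ?_
    rw [← sq_abs ((ν i : ℝ))]
  rw [jweight, hg, ← ENNReal.ofReal_natCast, ENNReal.ofReal_rpow_of_pos (by exact_mod_cast Qn_pos n ν)]

lemma jweight_le {a : ℝ} (ha : a ≤ 0) (n : ℕ) (ν : Fin n → ℤ) :
    jweight n a ν ≤ (2:ℝ≥0∞) ^ ((shl n ν : ℝ) * (a/2)) := by
  rw [jweight_eq]
  have h1 : ((2:ℝ≥0∞) ^ (shl n ν : ℕ)) ≤ (Qn n ν : ℝ≥0∞) := by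
    have h := Nat.pow_log_le_self 2 (Qn_pos n ν).ne'
    have h2 : ((2 ^ shl n ν : ℕ) : ℝ≥0∞) ≤ ((Qn n ν : ℕ) : ℝ≥0∞) := by exact_mod_cast h
    simpa using h2
  have anti : (Qn n ν : ℝ≥0∞) ^ (a/2) ≤ ((2:ℝ≥0∞) ^ (shl n ν : ℕ)) ^ (a/2) := by
    have hnn : (0:ℝ) ≤ -(a/2) := by linarith
    have e1 : (Qn n ν : ℝ≥0∞) ^ (a/2) = ((Qn n ν : ℝ≥0∞) ^ (-(a/2)))⁻¹ := by
      rw [← ENNReal.rpow_neg, neg_neg]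
    have e2 : ((2:ℝ≥0∞) ^ (shl n ν : ℕ)) ^ (a/2) = (((2:ℝ≥0∞) ^ (shl n ν : ℕ)) ^ (-(a/2)))⁻¹ := by
      rw [← ENNReal.rpow_neg, neg_neg]
    rw [e1, e2]
    exact ENNReal.inv_le_inv.mpr (ENNReal.rpow_le_rpow h1 hnn)
  refine anti.trans (le_of_eq ?_)
  rw [← ENNReal.rpow_natCast (2:ℝ≥0∞) (shl n ν), ← ENNReal.rpow_mul]

lemma pt_partition (m : ℕ) (x : ℝ≥0∞) : ∑' k : ℕ, (if m = k then (1:ℝ≥0∞) else 0) * x = x := by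
  calc ∑' k : ℕ, (if m = k then (1:ℝ≥0∞) else 0) * x
      = ∑' k : ℕ, (if k = m then x else 0) := by
        refine tsum_congr fun k => ?_
        by_cases h : m = k
        · simp [h]
        · simp [h, Ne.symm h]
    _ = x := tsum_ite_eq m (fun _ => x)

lemma tsum_partition {α : Type*} (σ : α → ℕ) (g : α → ℝ≥0∞) :
    ∑' x, g x = ∑' (k : ℕ) (x : α), (if σ x = k then 1 else 0) * g x := by
  rw [ENNReal.tsum_comm]
  exact tsum_congr fun x => (pt_partition (σ x) (g x)).symm

lemma ind_sq (c : Prop) [Decidable c] (x : ℝ≥0∞) :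
    ((if c then (1:ℝ≥0∞) else 0) * x) ^ 2 = (if c then 1 else 0) * x ^ 2 := by
  split <;> simp

lemma card_shell (n : ℕ) (j : ℕ) :
    ∑' μ : Fin n → ℤ, (if shl n μ = j then (1:ℝ≥0∞) else 0)
      ≤ (2:ℝ≥0∞) ^ (((j:ℝ)/2 + 3) * n) := by
  set c : ℕ := (j+2)/2 with hc
  set R : ℕ := 2 ^ c with hR
  set F : Finset (Fin n → ℤ) := Fintype.piFinset (fun _ => Finset.Icc (-(R:ℤ)) (R:ℤ)) with hF
  have hmem : ∀ μ : Fin n → ℤ, shl n μ = j → μ ∈ F := by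
    intro μ hμ
    have hlt : Qn n μ < 2 ^ (j+1) := by
      have := Nat.lt_pow_succ_log_self (one_lt_two) (Qn n μ)
      rwa [← shl, hμ] at this
    have hbound : ∀ i, (μ i).natAbs < R := by
      intro i
      have h1 : (μ i).natAbs ^ 2 < 2 ^ (j+1) := by
        have : (μ i).natAbs ^ 2 ≤ ∑ i', (μ i').natAbs ^ 2 :=
          Finset.single_le_sum (f := fun i' => (μ i').natAbs ^ 2) (fun _ _ => Nat.zero_le _)
            (Finset.mem_univ i)
        calc (μ i).natAbs ^ 2 ≤ ∑ i', (μ i').natAbs ^ 2 := this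
          _ < Qn n μ := by rw [Qn]; omega
          _ < 2 ^ (j+1) := hlt
      have h2 : 2 ^ (j+1) ≤ R ^ 2 := by
        rw [hR, ← pow_mul]
        exact Nat.pow_le_pow_right (by norm_num) (by omega)
      have := lt_of_lt_of_le h1 h2
      exact lt_of_pow_lt_pow_left₀ 2 (Nat.zero_le _) this
    rw [hF, Fintype.mem_piFinset]
    intro i
    have := hbound i
    rw [Finset.mem_Icc]
    omega
  have hcard : (F.card : ℝ≥0∞) ≤ (2:ℝ≥0∞) ^ (((c:ℕ) + 2) * n) := by
    have h1 : F.card = (2*R+1) ^ n := by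
      rw [hF, Fintype.card_piFinset]
      have : (Finset.Icc (-(R:ℤ)) (R:ℤ)).card = 2*R+1 := by
        rw [Int.card_Icc]
        omega
      simp [this]
    have h2 : (2*R+1) ^ n ≤ (2 ^ (c+2)) ^ n := by
      apply Nat.pow_le_pow_left
      have hR1 : 1 ≤ R := Nat.one_le_two_pow
      calc 2*R+1 ≤ 4*R := by omega
        _ = 2 ^ (c+2) := by rw [hR]; ring
    rw [h1]
    calc (((2*R+1) ^ n : ℕ) : ℝ≥0∞) ≤ (((2 ^ (c+2)) ^ n : ℕ) : ℝ≥0∞) := by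
          exact_mod_cast Nat.cast_le.mpr h2
      _ = (2:ℝ≥0∞) ^ ((c+2) * n) := by push_cast [pow_mul]; ring
  have hsum : ∑' μ : Fin n → ℤ, (if shl n μ = j then (1:ℝ≥0∞) else 0) ≤ (F.card : ℝ≥0∞) := by
    have hvanish : ∀ μ ∉ F, (if shl n μ = j then (1:ℝ≥0∞) else 0) = 0 := by
      intro μ hμ
      by_cases h : shl n μ = j
      · exact absurd (hmem μ h) hμ
      · simp [h]
    rw [tsum_eq_sum hvanish]
    calc ∑ μ ∈ F, (if shl n μ = j then (1:ℝ≥0∞) else 0) ≤ ∑ _μ ∈ F, (1:ℝ≥0∞) :=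
          Finset.sum_le_sum fun μ _ => by split <;> simp
      _ = (F.card : ℝ≥0∞) := by simp
  refine hsum.trans (hcard.trans ?_)
  have hnat : ((2:ℝ≥0∞) ^ ((c+2) * n)) = (2:ℝ≥0∞) ^ ((((c+2)*n : ℕ) : ℝ)) := by
    rw [ENNReal.rpow_natCast]
  rw [hnat]
  apply ENNReal.rpow_le_rpow_of_exponent_le one_le_two
  have hcr : (c:ℝ) ≤ (j:ℝ)/2 + 1 := by
    have h1 : ((j+2)/2 : ℕ) ≤ (j+2)/2 := Nat.le_refl _
    have h2 : (((j+2)/2 : ℕ) : ℝ) ≤ ((j:ℝ)+2)/2 := by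
      have := Nat.cast_div_le (m := j+2) (n := 2) (α := ℝ)
      push_cast at this ⊢
      linarith
    rw [hc]
    linarith
  push_cast
  have hn0 : (0:ℝ) ≤ n := Nat.cast_nonneg n
  nlinarith

lemma two_rpow_add (x y : ℝ) : (2:ℝ≥0∞) ^ (x+y) = 2^x * 2^y :=
  ENNReal.rpow_add x y two_ne_zero ENNReal.ofNat_ne_top

lemma two_rpow_sq (x : ℝ) : ((2:ℝ≥0∞) ^ x) ^ (2:ℕ) = 2 ^ (x*2) := by
  rw [← ENNReal.rpow_natCast ((2:ℝ≥0∞)^x) 2, ← ENNReal.rpow_mul]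
  norm_num

lemma two_rpow_mono {x y : ℝ} (h : x ≤ y) : (2:ℝ≥0∞)^x ≤ 2^y :=
  ENNReal.rpow_le_rpow_of_exponent_le one_le_two h

lemma sqrt_mul (x y : ℝ≥0∞) : (x*y)^(1/2:ℝ) = x^(1/2:ℝ)*y^(1/2:ℝ) :=
  ENNReal.mul_rpow_of_nonneg _ _ (by norm_num)

/-- shell-restricted square sum of A₂ -/
noncomputable def Bsh (n : ℕ) (A₂ : (Fin n → ℤ) → ℝ≥0∞) (k : ℕ) : ℝ≥0∞ :=
  ∑' η, (if shl n η = k then (1:ℝ≥0∞) else 0) * A₂ η ^ 2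

/-- the (j,k) piece -/
noncomputable def Hjk (n : ℕ) (a₁ a₂ : ℝ) (A₁ A₂ : (Fin n → ℤ) → ℝ≥0∞) (j k : ℕ)
    (μ : Fin n → ℤ) : ℝ≥0∞ :=
  (if shl n μ = j then 1 else 0) * jweight n a₁ μ *
    ∑' ν, (if shl n (μ - ν) = k then (1:ℝ≥0∞) else 0) * jweight n a₂ (μ - ν) * A₁ ν * A₂ (μ - ν)

lemma shell_sq_changevar (n : ℕ) (A : (Fin n → ℤ) → ℝ≥0∞) (k : ℕ) (μ : Fin n → ℤ) :
    ∑' ν, ((if shl n (μ - ν) = k then (1:ℝ≥0∞) else 0) * A (μ - ν)) ^ 2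
      = Bsh n A k := by
  have := (Equiv.subLeft μ).tsum_eq
    (f := fun η => (if shl n η = k then (1:ℝ≥0∞) else 0) * A η ^ 2)
  rw [Bsh, ← this]
  exact tsum_congr fun ν => ind_sq _ _

lemma Tbound_i (n : ℕ) {a₂ : ℝ} (ha₂ : a₂ ≤ 0) (A₁ A₂ : (Fin n → ℤ) → ℝ≥0∞) (k : ℕ)
    (μ : Fin n → ℤ) :
    ∑' ν, (if shl n (μ - ν) = k then (1:ℝ≥0∞) else 0) * jweight n a₂ (μ - ν) * A₁ ν * A₂ (μ - ν)
      ≤ (2:ℝ≥0∞) ^ ((k:ℝ) * (a₂/2)) *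
        ((∑' ν, A₁ ν ^ 2) ^ (1/2:ℝ) * (Bsh n A₂ k) ^ (1/2:ℝ)) := by
  set w : ℝ≥0∞ := (2:ℝ≥0∞) ^ ((k:ℝ) * (a₂/2)) with hw
  have hterm : ∀ ν, (if shl n (μ - ν) = k then (1:ℝ≥0∞) else 0) * jweight n a₂ (μ - ν)
      * A₁ ν * A₂ (μ - ν)
      ≤ w * (A₁ ν * ((if shl n (μ - ν) = k then (1:ℝ≥0∞) else 0) * A₂ (μ - ν))) := by
    intro ν
    by_cases h : shl n (μ - ν) = k
    · have hjw : jweight n a₂ (μ - ν) ≤ w := by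
        have := jweight_le ha₂ n (μ - ν)
        rwa [h] at this
      simp only [h, if_pos]
      calc (1:ℝ≥0∞) * jweight n a₂ (μ - ν) * A₁ ν * A₂ (μ - ν)
          = jweight n a₂ (μ - ν) * (A₁ ν * A₂ (μ - ν)) := by ring
        _ ≤ w * (A₁ ν * A₂ (μ - ν)) := mul_le_mul_left hjw _
        _ = w * (A₁ ν * (1 * A₂ (μ - ν))) := by ring
    · simp [h]
  calc _ ≤ ∑' ν, w * (A₁ ν * ((if shl n (μ - ν) = k then (1:ℝ≥0∞) else 0) * A₂ (μ - ν))) :=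
        ENNReal.tsum_le_tsum hterm
    _ = w * ∑' ν, A₁ ν * ((if shl n (μ - ν) = k then (1:ℝ≥0∞) else 0) * A₂ (μ - ν)) :=
        ENNReal.tsum_mul_left
    _ ≤ w * ((∑' ν, A₁ ν ^ 2) ^ (1/2:ℝ) *
          (∑' ν, ((if shl n (μ - ν) = k then (1:ℝ≥0∞) else 0) * A₂ (μ - ν)) ^ 2) ^ (1/2:ℝ)) :=
        mul_le_mul_right (tsum_cauchy_schwarz _ _) w
    _ = w * ((∑' ν, A₁ ν ^ 2) ^ (1/2:ℝ) * (Bsh n A₂ k) ^ (1/2:ℝ)) := by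
        rw [shell_sq_changevar]

lemma Tbound_ii (n : ℕ) {a₂ : ℝ} (ha₂ : a₂ ≤ 0) (A₁ A₂ : (Fin n → ℤ) → ℝ≥0∞) (k : ℕ)
    (μ : Fin n → ℤ) :
    ∑' ν, (if shl n (μ - ν) = k then (1:ℝ≥0∞) else 0) * jweight n a₂ (μ - ν) * A₁ ν * A₂ (μ - ν)
      ≤ (2:ℝ≥0∞) ^ ((k:ℝ) * (a₂/2)) *
        ((∑' ν, (if shl n (μ - ν) = k then (1:ℝ≥0∞) else 0) * A₁ ν ^ 2) ^ (1/2:ℝ)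
          * (Bsh n A₂ k) ^ (1/2:ℝ)) := by
  set w : ℝ≥0∞ := (2:ℝ≥0∞) ^ ((k:ℝ) * (a₂/2)) with hw
  have hterm : ∀ ν, (if shl n (μ - ν) = k then (1:ℝ≥0∞) else 0) * jweight n a₂ (μ - ν)
      * A₁ ν * A₂ (μ - ν)
      ≤ w * (((if shl n (μ - ν) = k then (1:ℝ≥0∞) else 0) * A₁ ν)
          * ((if shl n (μ - ν) = k then (1:ℝ≥0∞) else 0) * A₂ (μ - ν))) := by
    intro ν
    by_cases h : shl n (μ - ν) = k
    · have hjw : jweight n a₂ (μ - ν) ≤ w := by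
        have := jweight_le ha₂ n (μ - ν)
        rwa [h] at this
      simp only [h, if_pos]
      calc (1:ℝ≥0∞) * jweight n a₂ (μ - ν) * A₁ ν * A₂ (μ - ν)
          = jweight n a₂ (μ - ν) * (A₁ ν * A₂ (μ - ν)) := by ring
        _ ≤ w * (A₁ ν * A₂ (μ - ν)) := mul_le_mul_left hjw _
        _ = w * ((1 * A₁ ν) * (1 * A₂ (μ - ν))) := by ring
    · simp [h]
  calc _ ≤ ∑' ν, w * (((if shl n (μ - ν) = k then (1:ℝ≥0∞) else 0) * A₁ ν)
          * ((if shl n (μ - ν) = k then (1:ℝ≥0∞) else 0) * A₂ (μ - ν))) :=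
        ENNReal.tsum_le_tsum hterm
    _ = w * ∑' ν, ((if shl n (μ - ν) = k then (1:ℝ≥0∞) else 0) * A₁ ν)
          * ((if shl n (μ - ν) = k then (1:ℝ≥0∞) else 0) * A₂ (μ - ν)) :=
        ENNReal.tsum_mul_left
    _ ≤ w * ((∑' ν, ((if shl n (μ - ν) = k then (1:ℝ≥0∞) else 0) * A₁ ν) ^ 2) ^ (1/2:ℝ) *
          (∑' ν, ((if shl n (μ - ν) = k then (1:ℝ≥0∞) else 0) * A₂ (μ - ν)) ^ 2) ^ (1/2:ℝ)) :=
        mul_le_mul_right (tsum_cauchy_schwarz _ _) w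
    _ = w * ((∑' ν, (if shl n (μ - ν) = k then (1:ℝ≥0∞) else 0) * A₁ ν ^ 2) ^ (1/2:ℝ)
          * (Bsh n A₂ k) ^ (1/2:ℝ)) := by
        rw [shell_sq_changevar]
        congr 2
        exact congrArg (fun z => z ^ (1/2:ℝ))
          (tsum_congr fun ν => ind_sq (shl n (μ - ν) = k) (A₁ ν))

lemma Hsq_i (n : ℕ) {a₁ a₂ : ℝ} (h₁ : a₁ ≤ 0) (h₂ : a₂ ≤ 0)
    (A₁ A₂ : (Fin n → ℤ) → ℝ≥0∞) (j k : ℕ) :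
    ∑' μ, (Hjk n a₁ a₂ A₁ A₂ j k μ) ^ 2
      ≤ (2:ℝ≥0∞) ^ ((j:ℝ)*a₁ + ((k:ℝ)*a₂ + ((j:ℝ)/2+3)*(n:ℝ)))
          * ((∑' ν, A₁ ν ^ 2) * Bsh n A₂ k) := by
  set N₁ : ℝ≥0∞ := ∑' ν, A₁ ν ^ 2 with hN
  set c : ℝ≥0∞ := (2:ℝ≥0∞) ^ ((j:ℝ)*(a₁/2)) * ((2:ℝ≥0∞) ^ ((k:ℝ)*(a₂/2)) *
      (N₁ ^ (1/2:ℝ) * (Bsh n A₂ k) ^ (1/2:ℝ))) with hc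
  have hH : ∀ μ, Hjk n a₁ a₂ A₁ A₂ j k μ ≤ (if shl n μ = j then (1:ℝ≥0∞) else 0) * c := by
    intro μ
    by_cases h : shl n μ = j
    · have hw : jweight n a₁ μ ≤ (2:ℝ≥0∞) ^ ((j:ℝ)*(a₁/2)) := by
        have := jweight_le h₁ n μ
        rwa [h] at this
      rw [Hjk]
      simp only [h, if_pos]
      calc (1:ℝ≥0∞) * jweight n a₁ μ *
            (∑' ν, (if shl n (μ - ν) = k then (1:ℝ≥0∞) else 0) * jweight n a₂ (μ - ν)
              * A₁ ν * A₂ (μ - ν))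
          = jweight n a₁ μ * (∑' ν, (if shl n (μ - ν) = k then (1:ℝ≥0∞) else 0)
              * jweight n a₂ (μ - ν) * A₁ ν * A₂ (μ - ν)) := by ring
        _ ≤ (2:ℝ≥0∞) ^ ((j:ℝ)*(a₁/2)) * ((2:ℝ≥0∞) ^ ((k:ℝ)*(a₂/2)) *
              (N₁ ^ (1/2:ℝ) * (Bsh n A₂ k) ^ (1/2:ℝ))) :=
            mul_le_mul' hw (Tbound_i n h₂ A₁ A₂ k μ)
        _ = 1 * c := (one_mul c).symm
    · simp [Hjk, h]
  have hsq : ∀ μ, (Hjk n a₁ a₂ A₁ A₂ j k μ) ^ 2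
      ≤ (if shl n μ = j then (1:ℝ≥0∞) else 0) * c ^ 2 := by
    intro μ
    calc (Hjk n a₁ a₂ A₁ A₂ j k μ) ^ 2
        ≤ ((if shl n μ = j then (1:ℝ≥0∞) else 0) * c) ^ 2 := pow_le_pow_left' (hH μ) 2
      _ = (if shl n μ = j then (1:ℝ≥0∞) else 0) * c ^ 2 := ind_sq _ _
  have hcsq : c ^ 2 = (2:ℝ≥0∞) ^ ((j:ℝ)*a₁) * ((2:ℝ≥0∞) ^ ((k:ℝ)*a₂) * (N₁ * Bsh n A₂ k)) := by
    rw [hc, mul_pow, mul_pow, mul_pow, two_rpow_sq, two_rpow_sq, sq_sqrt, sq_sqrt,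
      show (j:ℝ)*(a₁/2)*2 = (j:ℝ)*a₁ by ring, show (k:ℝ)*(a₂/2)*2 = (k:ℝ)*a₂ by ring]
  calc ∑' μ, (Hjk n a₁ a₂ A₁ A₂ j k μ) ^ 2
      ≤ ∑' μ, (if shl n μ = j then (1:ℝ≥0∞) else 0) * c ^ 2 := ENNReal.tsum_le_tsum hsq
    _ = (∑' μ, (if shl n μ = j then (1:ℝ≥0∞) else 0)) * c ^ 2 := ENNReal.tsum_mul_right
    _ ≤ (2:ℝ≥0∞) ^ (((j:ℝ)/2 + 3) * n) * c ^ 2 := mul_le_mul_left (card_shell n j) _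
    _ = (2:ℝ≥0∞) ^ ((j:ℝ)*a₁ + ((k:ℝ)*a₂ + ((j:ℝ)/2+3)*(n:ℝ))) * (N₁ * Bsh n A₂ k) := by
        rw [hcsq, two_rpow_add, two_rpow_add]
        ring

lemma Hsq_ii (n : ℕ) {a₁ a₂ : ℝ} (h₁ : a₁ ≤ 0) (h₂ : a₂ ≤ 0)
    (A₁ A₂ : (Fin n → ℤ) → ℝ≥0∞) (j k : ℕ) :
    ∑' μ, (Hjk n a₁ a₂ A₁ A₂ j k μ) ^ 2
      ≤ (2:ℝ≥0∞) ^ ((j:ℝ)*a₁ + ((k:ℝ)*a₂ + ((k:ℝ)/2+3)*(n:ℝ)))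
          * ((∑' ν, A₁ ν ^ 2) * Bsh n A₂ k) := by
  set N₁ : ℝ≥0∞ := ∑' ν, A₁ ν ^ 2 with hN
  set P : (Fin n → ℤ) → ℝ≥0∞ :=
    fun μ => ∑' ν, (if shl n (μ - ν) = k then (1:ℝ≥0∞) else 0) * A₁ ν ^ 2 with hP
  have hH : ∀ μ, Hjk n a₁ a₂ A₁ A₂ j k μ
      ≤ (2:ℝ≥0∞) ^ ((j:ℝ)*(a₁/2)) * ((2:ℝ≥0∞) ^ ((k:ℝ)*(a₂/2)) *
          ((P μ) ^ (1/2:ℝ) * (Bsh n A₂ k) ^ (1/2:ℝ))) := by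
    intro μ
    by_cases h : shl n μ = j
    · have hw : jweight n a₁ μ ≤ (2:ℝ≥0∞) ^ ((j:ℝ)*(a₁/2)) := by
        have := jweight_le h₁ n μ
        rwa [h] at this
      rw [Hjk]
      simp only [h, if_pos]
      calc (1:ℝ≥0∞) * jweight n a₁ μ *
            (∑' ν, (if shl n (μ - ν) = k then (1:ℝ≥0∞) else 0) * jweight n a₂ (μ - ν)
              * A₁ ν * A₂ (μ - ν))
          = jweight n a₁ μ * (∑' ν, (if shl n (μ - ν) = k then (1:ℝ≥0∞) else 0)
              * jweight n a₂ (μ - ν) * A₁ ν * A₂ (μ - ν)) := by ring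
        _ ≤ (2:ℝ≥0∞) ^ ((j:ℝ)*(a₁/2)) * ((2:ℝ≥0∞) ^ ((k:ℝ)*(a₂/2)) *
              ((P μ) ^ (1/2:ℝ) * (Bsh n A₂ k) ^ (1/2:ℝ))) :=
            mul_le_mul' hw (Tbound_ii n h₂ A₁ A₂ k μ)
    · rw [Hjk]
      simp [h]
  have hsq : ∀ μ, (Hjk n a₁ a₂ A₁ A₂ j k μ) ^ 2
      ≤ (2:ℝ≥0∞) ^ ((j:ℝ)*a₁) * ((2:ℝ≥0∞) ^ ((k:ℝ)*a₂) * (P μ * Bsh n A₂ k)) := by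
    intro μ
    calc (Hjk n a₁ a₂ A₁ A₂ j k μ) ^ 2
        ≤ ((2:ℝ≥0∞) ^ ((j:ℝ)*(a₁/2)) * ((2:ℝ≥0∞) ^ ((k:ℝ)*(a₂/2)) *
            ((P μ) ^ (1/2:ℝ) * (Bsh n A₂ k) ^ (1/2:ℝ)))) ^ 2 := pow_le_pow_left' (hH μ) 2
      _ = (2:ℝ≥0∞) ^ ((j:ℝ)*a₁) * ((2:ℝ≥0∞) ^ ((k:ℝ)*a₂) * (P μ * Bsh n A₂ k)) := by
          rw [mul_pow, mul_pow, mul_pow, two_rpow_sq, two_rpow_sq, sq_sqrt, sq_sqrt,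
            show (j:ℝ)*(a₁/2)*2 = (j:ℝ)*a₁ by ring, show (k:ℝ)*(a₂/2)*2 = (k:ℝ)*a₂ by ring]
  have hPsum : ∑' μ, P μ ≤ (2:ℝ≥0∞) ^ (((k:ℝ)/2 + 3) * n) * N₁ := by
    rw [hP, ENNReal.tsum_comm]
    have hinner : ∀ ν : Fin n → ℤ,
        ∑' μ, (if shl n (μ - ν) = k then (1:ℝ≥0∞) else 0) * A₁ ν ^ 2
          ≤ (2:ℝ≥0∞) ^ (((k:ℝ)/2 + 3) * n) * A₁ ν ^ 2 := by
      intro ν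
      rw [ENNReal.tsum_mul_right]
      refine mul_le_mul_left ?_ _
      have hcv := (Equiv.subRight ν).tsum_eq
        (f := fun η => (if shl n η = k then (1:ℝ≥0∞) else 0))
      calc ∑' μ, (if shl n (μ - ν) = k then (1:ℝ≥0∞) else 0)
          = ∑' η, (if shl n η = k then (1:ℝ≥0∞) else 0) := hcv
        _ ≤ _ := card_shell n k
    calc ∑' (ν) (μ), (if shl n (μ - ν) = k then (1:ℝ≥0∞) else 0) * A₁ ν ^ 2
        ≤ ∑' ν, (2:ℝ≥0∞) ^ (((k:ℝ)/2 + 3) * n) * A₁ ν ^ 2 := ENNReal.tsum_le_tsum hinner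
      _ = (2:ℝ≥0∞) ^ (((k:ℝ)/2 + 3) * n) * N₁ := ENNReal.tsum_mul_left
  calc ∑' μ, (Hjk n a₁ a₂ A₁ A₂ j k μ) ^ 2
      ≤ ∑' μ, (2:ℝ≥0∞) ^ ((j:ℝ)*a₁) * ((2:ℝ≥0∞) ^ ((k:ℝ)*a₂) * (P μ * Bsh n A₂ k)) :=
        ENNReal.tsum_le_tsum hsq
    _ = (2:ℝ≥0∞) ^ ((j:ℝ)*a₁) * (2:ℝ≥0∞) ^ ((k:ℝ)*a₂) * Bsh n A₂ k * ∑' μ, P μ := by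
        rw [ENNReal.tsum_mul_left]
        rw [ENNReal.tsum_mul_left]
        have : ∑' μ, P μ * Bsh n A₂ k = (∑' μ, P μ) * Bsh n A₂ k := ENNReal.tsum_mul_right
        rw [this]
        ring
    _ ≤ (2:ℝ≥0∞) ^ ((j:ℝ)*a₁) * (2:ℝ≥0∞) ^ ((k:ℝ)*a₂) * Bsh n A₂ k *
          ((2:ℝ≥0∞) ^ (((k:ℝ)/2 + 3) * n) * N₁) := mul_le_mul_right hPsum _
    _ = (2:ℝ≥0∞) ^ ((j:ℝ)*a₁ + ((k:ℝ)*a₂ + ((k:ℝ)/2+3)*(n:ℝ))) * (N₁ * Bsh n A₂ k) := by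
        rw [two_rpow_add, two_rpow_add]
        ring

lemma Hsq (n : ℕ) {a₁ a₂ : ℝ} (h₁ : a₁ ≤ 0) (h₂ : a₂ ≤ 0)
    (A₁ A₂ : (Fin n → ℤ) → ℝ≥0∞) (j k : ℕ) :
    ∑' μ, (Hjk n a₁ a₂ A₁ A₂ j k μ) ^ 2
      ≤ (2:ℝ≥0∞) ^ ((j:ℝ)*a₁ + ((k:ℝ)*a₂ + ((min j k:ℕ):ℝ)/2*(n:ℝ)+3*(n:ℝ)))
          * ((∑' ν, A₁ ν ^ 2) * Bsh n A₂ k) := by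
  rcases le_total j k with h | h
  · refine (Hsq_i n h₁ h₂ A₁ A₂ j k).trans (mul_le_mul_left (two_rpow_mono ?_) _)
    rw [min_eq_left h]
    ring_nf
    exact le_refl _
  · refine (Hsq_ii n h₁ h₂ A₁ A₂ j k).trans (mul_le_mul_left (two_rpow_mono ?_) _)
    rw [min_eq_right h]
    ring_nf
    exact le_refl _

theorem stmt_10 (n : ℕ) (hn : 1 ≤ n) (a₁ a₂ : ℝ) (h₁ : a₁ < 0) (h₂ : a₂ < 0)
    (hsum : a₁ + a₂ = -(n : ℝ) / 2) :
    ∃ C : ℝ≥0∞, 0 < C ∧ C < ⊤ ∧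
      ∀ A₁ A₂ : (Fin n → ℤ) → ℝ≥0∞,
        (∑' μ : Fin n → ℤ,
            (∑' ν : Fin n → ℤ,
              jweight n a₁ (ν + (μ - ν)) * jweight n a₂ (μ - ν) * A₁ ν * A₂ (μ - ν)) ^ 2)
              ^ (1/2 : ℝ)
          ≤ C * (∑' ν, (A₁ ν) ^ 2) ^ (1/2 : ℝ) * (∑' ν, (A₂ ν) ^ 2) ^ (1/2 : ℝ) := by
  set δ : ℝ := min (-a₁) (-a₂) with hδdef
  have hδ : 0 < δ := lt_min (neg_pos.mpr h₁) (neg_pos.mpr h₂)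
  set ρ : ℝ≥0∞ := (2:ℝ≥0∞) ^ (-(δ/2)) with hρdef
  have hρlt : ρ < 1 := ENNReal.rpow_lt_one_of_one_lt_of_neg ENNReal.one_lt_two (by linarith)
  set K : ℝ≥0∞ := 2 * (1 - ρ)⁻¹ with hKdef
  have hKne0 : K ≠ 0 := by
    have h1le : (1:ℝ≥0∞) - ρ ≤ 1 := tsub_le_self
    have h1top : (1:ℝ≥0∞) - ρ ≠ ⊤ := ne_top_of_le_ne_top ENNReal.one_ne_top h1le
    exact mul_ne_zero two_ne_zero (ENNReal.inv_ne_zero.mpr h1top)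
  have hKtop : K ≠ ⊤ := by
    apply ENNReal.mul_ne_top ENNReal.ofNat_ne_top
    rw [Ne, ENNReal.inv_eq_top, tsub_eq_zero_iff_le]
    exact hρlt.not_ge
  set Cb : ℝ≥0∞ := (2:ℝ≥0∞) ^ (3*(n:ℝ)) * K ^ 2 with hCbdef
  have hCb0 : 0 < Cb := by
    apply ENNReal.mul_pos
    · exact (ENNReal.rpow_pos two_pos ENNReal.ofNat_ne_top).ne'
    · exact pow_ne_zero 2 hKne0
  have hCbtop : Cb ≠ ⊤ := by
    apply ENNReal.mul_ne_top
    · exact (ENNReal.rpow_lt_top_of_nonneg (by positivity) ENNReal.ofNat_ne_top).ne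
    · exact ENNReal.pow_ne_top hKtop
  refine ⟨Cb ^ (1/2:ℝ), ENNReal.rpow_pos hCb0 hCbtop, ENNReal.rpow_lt_top_of_nonneg
    (by norm_num) hCbtop, ?_⟩
  intro A₁ A₂
  set N₁ : ℝ≥0∞ := ∑' ν, A₁ ν ^ 2 with hN₁
  set N₂ : ℝ≥0∞ := ∑' ν, A₂ ν ^ 2 with hN₂
  set Fm : (Fin n → ℤ) → ℝ≥0∞ :=
    fun μ => ∑' ν, jweight n a₁ μ * jweight n a₂ (μ - ν) * A₁ ν * A₂ (μ - ν) with hFm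
  -- rewrite the LHS
  have hgoal_eq : (∑' μ : Fin n → ℤ,
      (∑' ν : Fin n → ℤ,
        jweight n a₁ (ν + (μ - ν)) * jweight n a₂ (μ - ν) * A₁ ν * A₂ (μ - ν)) ^ 2)
      = ∑' μ, Fm μ ^ 2 := by
    refine tsum_congr fun μ => ?_
    congr 1
    refine tsum_congr fun ν => ?_
    have : ν + (μ - ν) = μ := by abel
    rw [this]
  rw [hgoal_eq]
  -- exponent inequality
  have hexp : ∀ j k : ℕ, (j:ℝ)*a₁ + ((k:ℝ)*a₂ + ((min j k:ℕ):ℝ)/2*(n:ℝ)+3*(n:ℝ))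
      ≤ 3*(n:ℝ) - (ddist j k : ℝ)*δ := by
    intro j k
    have hn' : (n:ℝ) = -2*(a₁+a₂) := by rw [hsum]; ring
    rcases le_total j k with h | h
    · have hmin : min j k = j := min_eq_left h
      have hd : (ddist j k : ℝ) = (k:ℝ) - (j:ℝ) := by
        rw [ddist]
        have : j - k = 0 := by omega
        rw [this]
        push_cast [Nat.cast_sub h]
        ring
      have hδ₂ : δ ≤ -a₂ := min_le_right _ _
      have hjk : (j:ℝ) ≤ (k:ℝ) := by exact_mod_cast h
      have aux : 0 ≤ ((k:ℝ) - j) * (-a₂ - δ) := mul_nonneg (by linarith) (by linarith)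
      rw [hmin, hd, hn']
      nlinarith [aux]
    · have hmin : min j k = k := min_eq_right h
      have hd : (ddist j k : ℝ) = (j:ℝ) - (k:ℝ) := by
        rw [ddist]
        have : k - j = 0 := by omega
        rw [this]
        push_cast [Nat.cast_sub h]
        ring
      have hδ₁ : δ ≤ -a₁ := min_le_left _ _
      have hjk : (k:ℝ) ≤ (j:ℝ) := by exact_mod_cast h
      have aux : 0 ≤ ((j:ℝ) - k) * (-a₁ - δ) := mul_nonneg (by linarith) (by linarith)
      rw [hmin, hd, hn']
      nlinarith [aux]
  -- L² bound for each piece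
  have HL2 : ∀ j k : ℕ, (∑' μ, (Hjk n a₁ a₂ A₁ A₂ j k μ) ^ 2) ^ (1/2:ℝ)
      ≤ ((2:ℝ≥0∞) ^ ((3*(n:ℝ))/2) * ρ ^ (ddist j k)) *
        (N₁ ^ (1/2:ℝ) * (Bsh n A₂ k) ^ (1/2:ℝ)) := by
    intro j k
    have h5 := Hsq n h₁.le h₂.le A₁ A₂ j k
    have step : (∑' μ, (Hjk n a₁ a₂ A₁ A₂ j k μ) ^ 2) ^ (1/2:ℝ)
        ≤ ((2:ℝ≥0∞) ^ ((j:ℝ)*a₁ + ((k:ℝ)*a₂ + ((min j k:ℕ):ℝ)/2*(n:ℝ)+3*(n:ℝ)))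
            * (N₁ * Bsh n A₂ k)) ^ (1/2:ℝ) := sqrt_le_sqrt h5
    refine step.trans ?_
    rw [sqrt_mul, sqrt_mul]
    refine mul_le_mul' ?_ le_rfl
    have e1 : ((2:ℝ≥0∞) ^ ((j:ℝ)*a₁ + ((k:ℝ)*a₂ + ((min j k:ℕ):ℝ)/2*(n:ℝ)+3*(n:ℝ)))) ^ (1/2:ℝ)
        = (2:ℝ≥0∞) ^ (((j:ℝ)*a₁ + ((k:ℝ)*a₂ + ((min j k:ℕ):ℝ)/2*(n:ℝ)+3*(n:ℝ))) * (1/2)) :=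
      (ENNReal.rpow_mul 2 _ _).symm ▸ rfl
    rw [← ENNReal.rpow_mul]
    have e2 : ((3*(n:ℝ)) - (ddist j k : ℝ)*δ) * (1/2)
        = (3*(n:ℝ))/2 + (-(δ/2)) * ((ddist j k : ℕ):ℝ) := by ring
    calc (2:ℝ≥0∞) ^ (((j:ℝ)*a₁ + ((k:ℝ)*a₂ + ((min j k:ℕ):ℝ)/2*(n:ℝ)+3*(n:ℝ))) * (1/2))
        ≤ (2:ℝ≥0∞) ^ ((3*(n:ℝ) - (ddist j k : ℝ)*δ) * (1/2)) := by
          apply two_rpow_mono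
          have := hexp j k
          linarith
      _ = (2:ℝ≥0∞) ^ ((3*(n:ℝ))/2) * ρ ^ (ddist j k) := by
          rw [e2, two_rpow_add, hρdef, ← ENNReal.rpow_natCast ((2:ℝ≥0∞) ^ (-(δ/2))) _,
            ← ENNReal.rpow_mul]
  -- partition of Fm over k-shells
  have claimA : ∀ (j : ℕ) (μ : Fin n → ℤ),
      (if shl n μ = j then (1:ℝ≥0∞) else 0) * Fm μ = ∑' k, Hjk n a₁ a₂ A₁ A₂ j k μ := by
    intro j μ
    have hL : (if shl n μ = j then (1:ℝ≥0∞) else 0) * Fm μ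
        = (if shl n μ = j then (1:ℝ≥0∞) else 0) * jweight n a₁ μ *
          ∑' ν, jweight n a₂ (μ - ν) * A₁ ν * A₂ (μ - ν) := by
      simp only [hFm]
      have h1 : ∀ ν, jweight n a₁ μ * jweight n a₂ (μ-ν) * A₁ ν * A₂ (μ-ν)
          = jweight n a₁ μ * (jweight n a₂ (μ-ν) * A₁ ν * A₂ (μ-ν)) := fun ν => by ring
      rw [tsum_congr h1, ENNReal.tsum_mul_left, ← mul_assoc]
    rw [hL]
    have hR : ∑' k, Hjk n a₁ a₂ A₁ A₂ j k μ
        = (if shl n μ = j then (1:ℝ≥0∞) else 0) * jweight n a₁ μ *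
          ∑' (k) (ν), (if shl n (μ - ν) = k then (1:ℝ≥0∞) else 0) * jweight n a₂ (μ - ν)
            * A₁ ν * A₂ (μ - ν) := by
      rw [← ENNReal.tsum_mul_left]
      rfl
    rw [hR]
    congr 1
    rw [ENNReal.tsum_comm]
    refine tsum_congr fun ν => ?_
    have h2 : ∀ k, (if shl n (μ - ν) = k then (1:ℝ≥0∞) else 0) * jweight n a₂ (μ - ν)
        * A₁ ν * A₂ (μ - ν)
        = (if shl n (μ - ν) = k then (1:ℝ≥0∞) else 0) *
          (jweight n a₂ (μ - ν) * A₁ ν * A₂ (μ - ν)) := fun k => by ring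
    rw [tsum_congr h2, pt_partition]
  -- the j-shell square sums
  set b : ℕ → ℝ≥0∞ := fun k => (Bsh n A₂ k) ^ (1/2:ℝ) with hb
  have hSj : ∀ j : ℕ, ∑' μ, ((if shl n μ = j then (1:ℝ≥0∞) else 0) * Fm μ) ^ 2
      ≤ (2:ℝ≥0∞) ^ (3*(n:ℝ)) * N₁ * (∑' k, ρ ^ (ddist j k) * b k) ^ 2 := by
    intro j
    have hmink : (∑' μ, (∑' k, Hjk n a₁ a₂ A₁ A₂ j k μ) ^ 2) ^ (1/2:ℝ)
        ≤ ∑' k, (∑' μ, (Hjk n a₁ a₂ A₁ A₂ j k μ) ^ 2) ^ (1/2:ℝ) :=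
      tsum_minkowski (fun k μ => Hjk n a₁ a₂ A₁ A₂ j k μ)
    have hsum2 : ∑' k, (∑' μ, (Hjk n a₁ a₂ A₁ A₂ j k μ) ^ 2) ^ (1/2:ℝ)
        ≤ ((2:ℝ≥0∞) ^ ((3*(n:ℝ))/2) * N₁ ^ (1/2:ℝ)) * ∑' k, ρ ^ (ddist j k) * b k := by
      rw [← ENNReal.tsum_mul_left]
      refine ENNReal.tsum_le_tsum fun k => ?_
      refine (HL2 j k).trans (le_of_eq ?_)
      rw [hb]
      ring
    have hsqrt : (∑' μ, ((if shl n μ = j then (1:ℝ≥0∞) else 0) * Fm μ) ^ 2) ^ (1/2:ℝ)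
        ≤ ((2:ℝ≥0∞) ^ ((3*(n:ℝ))/2) * N₁ ^ (1/2:ℝ)) * ∑' k, ρ ^ (ddist j k) * b k := by
      calc (∑' μ, ((if shl n μ = j then (1:ℝ≥0∞) else 0) * Fm μ) ^ 2) ^ (1/2:ℝ)
          = (∑' μ, (∑' k, Hjk n a₁ a₂ A₁ A₂ j k μ) ^ 2) ^ (1/2:ℝ) := by
            congr 1
            exact tsum_congr fun μ => by rw [claimA j μ]
        _ ≤ _ := hmink.trans hsum2
    calc ∑' μ, ((if shl n μ = j then (1:ℝ≥0∞) else 0) * Fm μ) ^ 2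
        = ((∑' μ, ((if shl n μ = j then (1:ℝ≥0∞) else 0) * Fm μ) ^ 2) ^ (1/2:ℝ)) ^ 2 :=
          (sq_sqrt _).symm
      _ ≤ (((2:ℝ≥0∞) ^ ((3*(n:ℝ))/2) * N₁ ^ (1/2:ℝ)) * ∑' k, ρ ^ (ddist j k) * b k) ^ 2 :=
          pow_le_pow_left' hsqrt 2
      _ = (2:ℝ≥0∞) ^ (3*(n:ℝ)) * N₁ * (∑' k, ρ ^ (ddist j k) * b k) ^ 2 := by
          rw [mul_pow, mul_pow, two_rpow_sq, sq_sqrt,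
            show (3*(n:ℝ))/2*2 = 3*(n:ℝ) by ring]
  -- sum over j, apply Schur
  have htotal : ∑' μ, Fm μ ^ 2 ≤ (2:ℝ≥0∞) ^ (3*(n:ℝ)) * N₁ * (K ^ 2 * N₂) := by
    have hpart : ∑' μ, Fm μ ^ 2
        = ∑' (j:ℕ) (μ), ((if shl n μ = j then (1:ℝ≥0∞) else 0) * Fm μ) ^ 2 := by
      rw [tsum_partition (shl n) (fun μ => Fm μ ^ 2)]
      exact tsum_congr fun j => tsum_congr fun μ => (ind_sq _ _).symm
    have hB2 : ∑' k, b k ^ 2 = N₂ := by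
      rw [hb]
      calc ∑' k, ((Bsh n A₂ k) ^ (1/2:ℝ)) ^ 2 = ∑' k, Bsh n A₂ k :=
            tsum_congr fun k => sq_sqrt _
        _ = N₂ := by
            rw [hN₂, tsum_partition (shl n) (fun η => A₂ η ^ 2)]
            rfl
    calc ∑' μ, Fm μ ^ 2
        = ∑' (j:ℕ) (μ), ((if shl n μ = j then (1:ℝ≥0∞) else 0) * Fm μ) ^ 2 := hpart
      _ ≤ ∑' j : ℕ, (2:ℝ≥0∞) ^ (3*(n:ℝ)) * N₁ * (∑' k, ρ ^ (ddist j k) * b k) ^ 2 :=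
          ENNReal.tsum_le_tsum hSj
      _ = (2:ℝ≥0∞) ^ (3*(n:ℝ)) * N₁ * ∑' j, (∑' k, ρ ^ (ddist j k) * b k) ^ 2 :=
          ENNReal.tsum_mul_left
      _ ≤ (2:ℝ≥0∞) ^ (3*(n:ℝ)) * N₁ * ((2 * (1-ρ)⁻¹) ^ 2 * ∑' k, b k ^ 2) :=
          mul_le_mul_right (schur ρ hρlt.le b) _
      _ = (2:ℝ≥0∞) ^ (3*(n:ℝ)) * N₁ * (K ^ 2 * N₂) := by rw [← hKdef, hB2]
  -- conclude
  calc (∑' μ, Fm μ ^ 2) ^ (1/2:ℝ)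
      ≤ ((2:ℝ≥0∞) ^ (3*(n:ℝ)) * N₁ * (K ^ 2 * N₂)) ^ (1/2:ℝ) := sqrt_le_sqrt htotal
    _ = (Cb * (N₁ * N₂)) ^ (1/2:ℝ) := by
        congr 1
        rw [hCbdef]
        ring
    _ = Cb ^ (1/2:ℝ) * N₁ ^ (1/2:ℝ) * N₂ ^ (1/2:ℝ) := by
        rw [sqrt_mul Cb (N₁ * N₂), sqrt_mul N₁ N₂, mul_assoc]
end
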